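/- Let p be a prime and k ≥ 0. Every nonzero vector v in the row space of the matrix B_k satisfies ‖v‖ = p^k. -/

import Mathlib

/-- The row space of a matrix over `ZMod p`: all linear combinations of its rows. -/
def rowSpace {p m n : ℕ} (M : Matrix (Fin m) (Fin n) (ZMod p)) :
    Submodule (ZMod p) (Fin n → ZMod p) :=
  Submodule.span (ZMod p) {v | ∃ i, v = M i}

/-- The capacity of a matrix: the maximal Hamming weight of a vector in its row space. -/
noncomputable def capacity {p m n : ℕ} (M : Matrix (Fin m) (Fin n) (ZMod p)) : ℕ :=
  sSup (hammingNorm '' (rowSpace M : Set (Fin n → ZMod p)))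

/-- `lambdaP p n` is the minimum capacity over all matrices over `𝔽_p`
with `n` columns, none of which is a zero column.  (For `n = 0` this gives `0`.) -/
noncomputable def lambdaP (p n : ℕ) : ℕ :=
  sInf {c | ∃ (m : ℕ) (M : Matrix (Fin m) (Fin n) (ZMod p)),
    (∀ j, ∃ i, M i j ≠ 0) ∧ c = capacity M}

/-- `sigmaP p k = 1 + p + ⋯ + p^k`. -/
def sigmaP (p k : ℕ) : ℕ := ∑ j ∈ Finset.range (k + 1), p ^ j

lemma sigmaP_pos (p k : ℕ) : 0 < sigmaP p k :=
  Finset.sum_pos' (fun _ _ => Nat.zero_le _)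
    ⟨0, Finset.mem_range.mpr (Nat.succ_pos k), by simp⟩

/-- The matrix `B_k`: `B_0 = [1]`; for `k ≥ 1`, the first `k` rows of `B_k` consist of
`p` copies of `B_{k-1}` side by side followed by a zero column, and the last row has,
for each `a = 0,…,p-1`, a block of `σ_{k-1}` entries equal to `a`, followed by a final `1`. -/
def matB (p : ℕ) : (k : ℕ) → Matrix (Fin (k + 1)) (Fin (sigmaP p k)) (ZMod p)
  | 0 => fun _ _ => 1
  | (k + 1) => fun r c =>
      if (c : ℕ) = sigmaP p (k + 1) - 1 then
        if (r : ℕ) = k + 1 then 1 else 0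
      else
        if hr : (r : ℕ) < k + 1 then
          matB p k ⟨r, hr⟩ ⟨(c : ℕ) % sigmaP p k, Nat.mod_lt _ (sigmaP_pos p k)⟩
        else (((c : ℕ) / sigmaP p k : ℕ) : ZMod p)

lemma sigmaP_succ (p k : ℕ) : sigmaP p (k + 1) = p * sigmaP p k + 1 := by
  unfold sigmaP
  rw [Finset.sum_range_succ']
  simp [pow_succ, Finset.mul_sum, mul_comm]

lemma sigmaP_pow (p k : ℕ) (hp : 1 ≤ p) : (p - 1) * sigmaP p k + 1 = p ^ (k + 1) := by
  induction k with
  | zero => simp [sigmaP]; omega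
  | succ k ih =>
    rw [sigmaP_succ, pow_succ]
    nlinarith [ih, Nat.sub_add_cancel hp]

lemma mem_rowSpace_iff {p m n : ℕ} (M : Matrix (Fin m) (Fin n) (ZMod p))
    (v : Fin n → ZMod p) :
    v ∈ rowSpace M ↔ ∃ c : Fin m → ZMod p, ∀ j, v j = ∑ i, c i * M i j := by
  have hset : {w | ∃ i, w = M i} = Set.range (fun i => M i) := by ext w; simp [eq_comm, Set.range]
  rw [rowSpace, hset, Submodule.mem_span_range_iff_exists_fun]
  constructor
  · rintro ⟨c, hc⟩
    exact ⟨c, fun j => by rw [← hc]; simp [Finset.sum_apply]⟩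
  · rintro ⟨c, hc⟩
    refine ⟨c, funext fun j => ?_⟩
    rw [hc j]; simp [Finset.sum_apply]

lemma count_lem (p : ℕ) (hp : p.Prime) (x t : ZMod p) (ht : t ≠ 0) :
    (∑ a : Fin p, if x + t * ((a : ℕ) : ZMod p) ≠ 0 then 1 else 0) = p - 1 := by
  haveI : Fact p.Prime := ⟨hp⟩
  have hbij : Function.Bijective (fun a : Fin p => t * ((a : ℕ) : ZMod p)) := by
    rw [Fintype.bijective_iff_injective_and_card]
    refine ⟨fun a b hab => ?_, by simp [ZMod.card]⟩
    have h1 : ((a : ℕ) : ZMod p) = ((b : ℕ) : ZMod p) := mul_left_cancel₀ ht hab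
    have h2 := congrArg ZMod.val h1
    rw [ZMod.val_cast_of_lt a.2, ZMod.val_cast_of_lt b.2] at h2
    exact Fin.ext h2
  rw [Fintype.sum_bijective _ hbij _ (fun b => if x + b ≠ 0 then 1 else 0) (fun a => rfl)]
  rw [← Finset.card_filter]
  have key := Finset.card_filter_add_card_filter_not (s := (Finset.univ : Finset (ZMod p)))
    (p := fun b => x + b = 0)
  have h1 : (Finset.univ.filter (fun b : ZMod p => x + b = 0)) = {-x} := by
    ext b
    simp only [Finset.mem_filter, Finset.mem_univ, true_and, Finset.mem_singleton]
    constructor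
    · intro h; linear_combination h
    · intro h; subst h; ring
  rw [h1] at key
  simp only [Finset.card_singleton, Finset.card_univ, ZMod.card] at key
  have h3 : (Finset.univ.filter (fun b : ZMod p => ¬ (x + b = 0))).card = p - 1 := by omega
  convert h3 using 2

theorem statement4 (p : ℕ) (hp : p.Prime) (k : ℕ)
    (v : Fin (sigmaP p k) → ZMod p) (hv : v ∈ rowSpace (matB p k)) (hv0 : v ≠ 0) :
    hammingNorm v = p ^ k := by
  classical
  induction k with
  | zero =>
    have hle : hammingNorm v ≤ 1 := by
      calc hammingNorm v ≤ Fintype.card (Fin (sigmaP p 0)) :=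
            (Finset.card_filter_le _ _).trans (by simp)
        _ = 1 := by simp [sigmaP]
    have hge : 0 < hammingNorm v := hammingNorm_pos_iff.mpr hv0
    simpa using le_antisymm hle hge
  | succ k ih =>
    obtain ⟨c, hc⟩ := (mem_rowSpace_iff _ _).mp hv
    have hs : 0 < sigmaP p k := sigmaP_pos p k
    have hN : sigmaP p (k + 1) = p * sigmaP p k + 1 := sigmaP_succ p k
    set t := c (Fin.last (k + 1)) with ht_def
    set u : Fin (sigmaP p k) → ZMod p :=
      fun i => ∑ r : Fin (k + 1), c r.castSucc * matB p k r i with hu_def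
    have hu : u ∈ rowSpace (matB p k) :=
      (mem_rowSpace_iff _ _).mpr ⟨fun r => c r.castSucc, fun j => rfl⟩
    have hB : ∀ (r : Fin (k + 2)) (j : Fin (sigmaP p (k + 1))), matB p (k + 1) r j =
        if (j : ℕ) = sigmaP p (k + 1) - 1 then (if (r : ℕ) = k + 1 then 1 else 0)
        else if hr : (r : ℕ) < k + 1 then
          matB p k ⟨r, hr⟩ ⟨(j : ℕ) % sigmaP p k, Nat.mod_lt _ (sigmaP_pos p k)⟩
        else (((j : ℕ) / sigmaP p k : ℕ) : ZMod p) := fun r j => rfl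
    have hval : ∀ j : Fin (sigmaP p (k + 1)),
        v j = if (j : ℕ) = sigmaP p (k + 1) - 1 then t
          else u ⟨(j : ℕ) % sigmaP p k, Nat.mod_lt _ hs⟩
            + t * (((j : ℕ) / sigmaP p k : ℕ) : ZMod p) := by
      intro j
      rw [hc j, Fin.sum_univ_castSucc]
      by_cases h : (j : ℕ) = sigmaP p (k + 1) - 1
      · rw [if_pos h]
        have e1 : ∀ r : Fin (k + 1), matB p (k + 1) r.castSucc j = 0 := fun r => by
          rw [hB, if_pos h, if_neg (by have := r.2; simp only [Fin.coe_castSucc]; omega)]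
        have e2 : matB p (k + 1) (Fin.last (k + 1)) j = 1 := by
          rw [hB, if_pos h, if_pos (by simp)]
        simp [e1, e2, ht_def]
      · rw [if_neg h]
        have e1 : ∀ r : Fin (k + 1), matB p (k + 1) r.castSucc j
            = matB p k r ⟨(j : ℕ) % sigmaP p k, Nat.mod_lt _ hs⟩ := fun r => by
          rw [hB, if_neg h, dif_pos (show ((r.castSucc : Fin (k + 2)) : ℕ) < k + 1 by
            simpa using r.2)]
          exact congrFun (congrArg (matB p k) (Fin.ext (by simp))) _
        have e2 : matB p (k + 1) (Fin.last (k + 1)) j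
            = (((j : ℕ) / sigmaP p k : ℕ) : ZMod p) := by
          rw [hB, if_neg h, dif_neg (by simp)]
        simp only [e1, e2]
        rfl
    -- counting
    have hcard : hammingNorm v = ∑ j : Fin (sigmaP p (k + 1)), if v j ≠ 0 then 1 else 0 := by
      rw [hammingNorm, Finset.card_filter]
    set e : Fin (p * sigmaP p k + 1) ≃ Fin (sigmaP p (k + 1)) := finCongr hN.symm with he_def
    rw [← Equiv.sum_comp e (fun j => if v j ≠ 0 then 1 else 0), Fin.sum_univ_castSucc] at hcard
    have hlast : v (e (Fin.last (p * sigmaP p k))) = t := by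
      rw [hval, if_pos]
      simp [he_def, hN]
    have hterm : ∀ (a : Fin p) (i : Fin (sigmaP p k)),
        v (e (Fin.castSucc (finProdFinEquiv (a, i)))) = u i + t * ((a : ℕ) : ZMod p) := by
      intro a i
      have hvalcoe : ((e (Fin.castSucc (finProdFinEquiv (a, i)))) : ℕ) = (i : ℕ) + sigmaP p k * a := by
        simp [he_def]
      have hlt : (i : ℕ) + sigmaP p k * (a : ℕ) < p * sigmaP p k := by
        calc (i : ℕ) + sigmaP p k * (a : ℕ) < sigmaP p k * ((a : ℕ) + 1) := by
              rw [Nat.mul_succ]; have := i.2; omega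
          _ ≤ sigmaP p k * p := Nat.mul_le_mul_left _ a.2
          _ = p * sigmaP p k := Nat.mul_comm _ _
      rw [hval, if_neg (by rw [hvalcoe]; omega)]
      congr 1
      · congr 1
        apply Fin.ext
        simp only [hvalcoe]
        rw [Nat.add_mul_mod_self_left, Nat.mod_eq_of_lt i.2]
      · congr 1
        rw [hvalcoe, Nat.add_mul_div_left _ _ hs, Nat.div_eq_of_lt i.2, Nat.zero_add]
    rw [← Equiv.sum_comp finProdFinEquiv
      (fun j : Fin (p * sigmaP p k) => if v (e (Fin.castSucc j)) ≠ 0 then 1 else 0),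
      Fintype.sum_prod_type] at hcard
    simp only [hterm, hlast] at hcard
    by_cases ht : t = 0
    · have hu0 : u ≠ 0 := by
        intro h0
        apply hv0
        funext j
        rw [hval j]
        split
        · exact ht
        · simp [h0, ht]
      have hih : hammingNorm u = p ^ k := ih u hu hu0
      simp only [ht, zero_mul, add_zero, ne_eq, not_true_eq_false, if_false] at hcard
      have hinner : (∑ i : Fin (sigmaP p k), if ¬ u i = 0 then 1 else 0) = hammingNorm u :=
        (Finset.card_filter _ _).symm
      simp only [hinner, Finset.sum_const, Finset.card_univ, Fintype.card_fin,
        smul_eq_mul] at hcard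
      rw [hcard, hih, pow_succ, mul_comm]
    · have hinner : ∀ i : Fin (sigmaP p k),
          (∑ a : Fin p, if u i + t * ((a : ℕ) : ZMod p) ≠ 0 then 1 else 0) = p - 1 :=
        fun i => count_lem p hp (u i) t ht
      rw [Finset.sum_comm] at hcard
      simp only [hinner, Finset.sum_const, Finset.card_univ, Fintype.card_fin, smul_eq_mul,
        if_pos ht] at hcard
      rw [hcard, mul_comm, sigmaP_pow p k hp.one_lt.le]
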